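/- Let a : ℕ → ℚ_p satisfy ‖a_i‖_p ≤ 1 for all i, and let t ∈ K satisfy ‖t‖ < 1. Then the series Σ_{i ≥ 0} (a_i/(i+1))·t^{i+1}, obtained by termwise integration of the power series Σ a_i t^i, converges in K (the family of terms is summable). -/

import Mathlib

/-- For a nonzero natural number `n`, the `p`-adic norm of `n` is at least `1/n`. -/
lemma padic_inv_le_norm_natCast {p : ℕ} [Fact p.Prime] (n : ℕ) (hn : 0 < n) :
    ((n : ℝ))⁻¹ ≤ ‖(n : ℚ_[p])‖ := by
  have hnz : (n : ℚ) ≠ 0 := by exact_mod_cast hn.ne'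
  have hle : (p : ℚ) ^ padicValNat p n ≤ (n : ℚ) := by
    exact_mod_cast Nat.le_of_dvd hn pow_padicValNat_dvd
  have hpos : (0 : ℚ) < (p : ℚ) ^ padicValNat p n := by
    have := (Fact.out : p.Prime).pos
    positivity
  have hq : (n : ℚ)⁻¹ ≤ padicNorm p n := by
    rw [padicNorm.eq_zpow_of_nonzero hnz, padicValRat.of_nat, zpow_neg, zpow_natCast]
    exact inv_anti₀ hpos hle
  have : ((n : ℚ_[p])) = ((n : ℚ) : ℚ_[p]) := by push_cast; ring
  rw [this, Padic.eq_padicNorm]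
  have := (Rat.cast_le (K := ℝ)).2 hq
  push_cast at this
  exact this

/-- Termwise integration of a `p`-adically integral power series converges on the
open residue disk `‖t‖ < 1` in a complete nonarchimedean normed `ℚ_p`-algebra `K`
with isometric structure map. -/
theorem tiny_integral_summable {p : ℕ} [Fact p.Prime] {K : Type*} [NormedField K]
    [CompleteSpace K] [Algebra ℚ_[p] K]
    (hna : ∀ x y : K, ‖x + y‖ ≤ max ‖x‖ ‖y‖)
    (hiso : ∀ a : ℚ_[p], ‖algebraMap ℚ_[p] K a‖ = ‖a‖)
    (a : ℕ → ℚ_[p]) (ha : ∀ i, ‖a i‖ ≤ 1)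
    (t : K) (ht : ‖t‖ < 1) :
    Summable (fun i : ℕ =>
      algebraMap ℚ_[p] K (a i / ((i : ℚ_[p]) + 1)) * t ^ (i + 1)) := by
  have hg : Summable (fun n : ℕ => (n : ℝ) * ‖t‖ ^ n) := by
    have := summable_pow_mul_geometric_of_norm_lt_one (R := ℝ) 1
      (show ‖‖t‖‖ < 1 by rwa [Real.norm_of_nonneg (norm_nonneg t)])
    simpa using this
  have hg' : Summable (fun i : ℕ => ((i : ℝ) + 1) * ‖t‖ ^ (i + 1)) := by
    have := (summable_nat_add_iff 1).2 hg
    simpa using this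
  apply Summable.of_norm_bounded hg'
  intro i
  rw [norm_mul, hiso, norm_pow]
  have hne : ((i : ℚ_[p]) + 1) ≠ 0 := by
    have : (((i + 1 : ℕ) : ℚ_[p])) ≠ 0 := Nat.cast_ne_zero.2 (Nat.succ_ne_zero i)
    push_cast at this; exact this
  have hpos : 0 < ‖((i : ℚ_[p]) + 1)‖ := norm_pos_iff.2 hne
  have key : (((i : ℝ)) + 1)⁻¹ ≤ ‖((i : ℚ_[p]) + 1)‖ := by
    have := padic_inv_le_norm_natCast (p := p) (i + 1) (Nat.succ_pos i)
    push_cast at this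
    exact this
  have hnorm : ‖a i / ((i : ℚ_[p]) + 1)‖ ≤ (i : ℝ) + 1 := by
    rw [norm_div]
    have h1 : ‖((i : ℚ_[p]) + 1)‖⁻¹ ≤ (i : ℝ) + 1 := by
      rw [inv_le_comm₀ hpos (by positivity)]
      exact key
    calc ‖a i‖ / ‖((i : ℚ_[p]) + 1)‖ ≤ 1 / ‖((i : ℚ_[p]) + 1)‖ :=
          by gcongr; exact ha i
      _ = ‖((i : ℚ_[p]) + 1)‖⁻¹ := one_div _
      _ ≤ (i : ℝ) + 1 := h1
  exact mul_le_mul_of_nonneg_right hnorm (pow_nonneg (norm_nonneg t) (i + 1))
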